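/- For any real γ6 and ε = ±1, the 4-dimensional Lie algebra with basis {e1, e2, e3, e4} and nonzero brackets [e1, e3] = −e2, [e1, e4] = ε·√(γ6² + 1)·e2, [e3, e4] = γ6·e2 is isomorphic to the direct product h3 × R: in the basis ẽ1 = e1, ẽ2 = e2, ẽ3 = −e3, ẽ4 = −γ6·e1 + ε·√(γ6² + 1)·e3 + e4, the only nonzero bracket is [ẽ1, ẽ3] = ẽ2. -/

import Mathlib

noncomputable section

/-- The Lie algebra with nonzero brackets `[e1,e3] = -e2`, `[e1,e4] = ε √(γ6²+1) e2`,
`[e3,e4] = γ6 e2` is isomorphic to `h3 × ℝ`: in the basis `ẽ1 = e1`, `ẽ2 = e2`,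
`ẽ3 = -e3`, `ẽ4 = -γ6 e1 + ε √(γ6²+1) e3 + e4` the only nonzero bracket is
`[ẽ1,ẽ3] = ẽ2`. -/
theorem isomorphic_to_h3_times_R' (γ6 ε : ℝ) (hε : ε = 1 ∨ ε = -1) :
    ∀ (L : Type) [LieRing L] [LieAlgebra ℝ L] (b : Module.Basis (Fin 4) ℝ L),
      ⁅b 0, b 2⁆ = -(b 1) →
      ⁅b 0, b 3⁆ = (ε * Real.sqrt (γ6^2 + 1)) • b 1 →
      ⁅b 2, b 3⁆ = γ6 • b 1 →
      ⁅b 0, b 1⁆ = 0 → ⁅b 1, b 2⁆ = 0 → ⁅b 1, b 3⁆ = 0 →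
      (⁅b 0, (-γ6) • b 0 + (ε * Real.sqrt (γ6^2 + 1)) • b 2 + b 3⁆ = 0 ∧
       ⁅b 1, (-γ6) • b 0 + (ε * Real.sqrt (γ6^2 + 1)) • b 2 + b 3⁆ = 0 ∧
       ⁅-(b 2), (-γ6) • b 0 + (ε * Real.sqrt (γ6^2 + 1)) • b 2 + b 3⁆ = 0 ∧
       ⁅b 0, -(b 2)⁆ = b 1) ∧
      (∀ (L' : Type) [LieRing L'] [LieAlgebra ℝ L'] (c : Module.Basis (Fin 4) ℝ L'),
        ⁅c 0, c 2⁆ = c 1 →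
        ⁅c 0, c 1⁆ = 0 → ⁅c 0, c 3⁆ = 0 → ⁅c 1, c 2⁆ = 0 → ⁅c 1, c 3⁆ = 0 →
        ⁅c 2, c 3⁆ = 0 →
        Nonempty (L ≃ₗ⁅ℝ⁆ L')) := by
  intro L _ _ b h02 h03 h23 h01 h12 h13
  set s : ℝ := ε * Real.sqrt (γ6^2 + 1) with hs
  have h20 : ⁅b 2, b 0⁆ = b 1 := by rw [← lie_skew, h02]; simp
  have h30 : ⁅b 3, b 0⁆ = -(s • b 1) := by rw [← lie_skew, h03]
  have h32 : ⁅b 3, b 2⁆ = -(γ6 • b 1) := by rw [← lie_skew, h23]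
  have h10 : ⁅b 1, b 0⁆ = 0 := by rw [← lie_skew, h01]; simp
  have h21 : ⁅b 2, b 1⁆ = 0 := by rw [← lie_skew, h12]; simp
  have h31 : ⁅b 3, b 1⁆ = 0 := by rw [← lie_skew, h13]; simp
  constructor
  · refine ⟨?_, ?_, ?_, ?_⟩
    · simp [lie_add, lie_smul, h02, h03, h01, lie_self]
    · simp [lie_add, lie_smul, h10, h12, h13]
    · simp [neg_lie, lie_add, lie_smul, h20, h21, h23, lie_self]
    · simp [h02]
  · intro L' _ _ c k02 k01 k03 k12 k13 k23
    have k20 : ⁅c 2, c 0⁆ = -(c 1) := by rw [← lie_skew, k02]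
    have k30 : ⁅c 3, c 0⁆ = 0 := by rw [← lie_skew, k03]; simp
    have k32 : ⁅c 3, c 2⁆ = 0 := by rw [← lie_skew, k23]; simp
    have k10 : ⁅c 1, c 0⁆ = 0 := by rw [← lie_skew, k01]; simp
    have k21 : ⁅c 2, c 1⁆ = 0 := by rw [← lie_skew, k12]; simp
    have k31 : ⁅c 3, c 1⁆ = 0 := by rw [← lie_skew, k13]; simp
    set v : Fin 4 → L' := ![c 0, c 1, -(c 2), c 3 + γ6 • c 0 + s • c 2] with hv
    set w : Fin 4 → L := ![b 0, b 1, -(b 2), b 3 - γ6 • b 0 + s • b 2] with hw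
    set f : L →ₗ[ℝ] L' := b.constr ℝ v with hf
    set g : L' →ₗ[ℝ] L := c.constr ℝ w with hg
    have hfb : ∀ i, f (b i) = v i := fun i => b.constr_basis ℝ v i
    have hgc : ∀ i, g (c i) = w i := fun i => c.constr_basis ℝ w i
    have hgf : ∀ x, g (f x) = x := by
      intro x
      have : g.comp f = LinearMap.id := by
        apply b.ext; intro i
        fin_cases i <;>
          simp [hfb, hgc, hv, hw, map_add, map_smul, map_neg] <;> abel
      simpa using LinearMap.congr_fun this x
    have hfg : ∀ x, f (g x) = x := by
      intro x
      have : f.comp g = LinearMap.id := by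
        apply c.ext; intro i
        fin_cases i <;>
          simp [hfb, hgc, hv, hw, map_add, map_smul, map_neg] <;> abel
      simpa using LinearMap.congr_fun this x
    have key : ∀ i j : Fin 4, f ⁅b i, b j⁆ = ⁅f (b i), f (b j)⁆ := by
      intro i j
      fin_cases i <;> fin_cases j <;>
        simp [hfb, hv, h02, h03, h23, h01, h12, h13, h20, h30, h32, h10, h21, h31,
          k02, k01, k03, k12, k13, k23, k20, k30, k32, k10, k21, k31,
          lie_add, add_lie, lie_smul, smul_lie, lie_neg, neg_lie, lie_self,
          map_add, map_smul, map_neg] <;> module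
    have maplie : ∀ x y : L, f ⁅x, y⁆ = ⁅f x, f y⁆ := by
      intro x y
      rw [← b.sum_repr x, ← b.sum_repr y]
      simp only [Fin.sum_univ_four, lie_add, add_lie, lie_smul, smul_lie,
        map_add, map_smul, key]
    exact ⟨{ toFun := f, map_add' := f.map_add, map_smul' := f.map_smul,
             map_lie' := maplie _ _,
             invFun := g, left_inv := hgf, right_inv := hfg }⟩
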